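/- Let G be a finite simple graph with nonnegative edge weights x such that every odd cycle of G has total weight at least 1, and suppose x_e < 1/2 for every edge e of G. If S is a set of vertices with d_x(u, v) ≤ 1/4 for every pair u, v ∈ S, then the induced subgraph G[S] is bipartite. -/

import Mathlib

open SimpleGraph

/-- The weight of a walk: the sum of the weights of its edges, counted with multiplicity. -/
def walkWeight {V : Type*} {G : SimpleGraph V} (x : Sym2 V → ℝ) {u v : V}
    (p : G.Walk u v) : ℝ :=
  (p.edges.map x).sum

/-- The shortest-path distance between `u` and `v` induced by the edge weights `x`. -/
noncomputable def wdist {V : Type*} (G : SimpleGraph V) (x : Sym2 V → ℝ) (u v : V) : ℝ :=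
  sInf {r | ∃ p : G.Walk u v, walkWeight x p = r}

section Aux

variable {V : Type*} {G : SimpleGraph V} {x : Sym2 V → ℝ}

lemma walkWeight_cons {u v w : V} (h : G.Adj u v) (p : G.Walk v w) :
    walkWeight x (Walk.cons h p) = x s(u, v) + walkWeight x p := by
  simp [walkWeight]

lemma walkWeight_append {u v w : V} (p : G.Walk u v) (q : G.Walk v w) :
    walkWeight x (p.append q) = walkWeight x p + walkWeight x q := by
  simp [walkWeight, Walk.edges_append]

lemma walkWeight_reverse {u v : V} (p : G.Walk u v) :
    walkWeight x p.reverse = walkWeight x p := by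
  simp [walkWeight, Walk.edges_reverse, List.sum_reverse]

lemma walkWeight_nil {u : V} : walkWeight x (Walk.nil : G.Walk u u) = 0 := by
  simp [walkWeight]

lemma walkWeight_nonneg (hx : ∀ e ∈ G.edgeSet, 0 ≤ x e) {u v : V} (p : G.Walk u v) :
    0 ≤ walkWeight x p := by
  apply List.sum_nonneg
  intro r hr
  simp only [List.mem_map] at hr
  obtain ⟨e, he, rfl⟩ := hr
  exact hx e (p.edges_subset_edgeSet he)

lemma length_eq_one_of_mem_edges {u v : V} (q : G.Walk u v) (hq : q.IsPath)
    (he : s(u, v) ∈ q.edges) : q.length = 1 := by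
  cases q with
  | nil => simp at he
  | @cons _ b _ h r =>
    rw [Walk.edges_cons, List.mem_cons] at he
    rcases he with he | he
    · have hvb : v = b := by
        rcases Sym2.eq_iff.mp he with ⟨-, h1⟩ | ⟨h1, h2⟩
        · exact h1
        · exact absurd h1 h.ne
      subst hvb
      have hr : r = Walk.nil := (Walk.isPath_iff_eq_nil (p := r)).mp hq.of_cons
      subst hr
      simp
    · have hmem : u ∈ r.support := Walk.fst_mem_support_of_mem_edges r he
      have hnd := hq.support_nodup
      rw [Walk.support_cons, List.nodup_cons] at hnd
      exact absurd hmem hnd.1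

lemma one_le_weight_of_odd_closed
    (hx0 : ∀ e ∈ G.edgeSet, 0 ≤ x e)
    (hodd : ∀ (v : V) (C : G.Walk v v), C.IsCycle → Odd C.length → 1 ≤ walkWeight x C) :
    ∀ (n : ℕ) (v : V) (p : G.Walk v v), p.length = n → Odd n → 1 ≤ walkWeight x p := by
  classical
  intro n
  induction n using Nat.strong_induction_on with
  | _ n ih =>
  intro v p hlen hodd_n
  cases p with
  | nil =>
    rw [← hlen] at hodd_n
    simp at hodd_n
  | @cons _ b _ hadj q =>
    by_cases hnd : q.support.Nodup
    · have hqp : q.IsPath := (Walk.isPath_def q).mpr hnd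
      by_cases he : s(v, b) ∈ q.edges
      · have h1 : q.length = 1 := length_eq_one_of_mem_edges q hqp (by rwa [Sym2.eq_swap])
        rw [← hlen] at hodd_n
        rw [Walk.length_cons, h1] at hodd_n
        simp [Nat.odd_iff] at hodd_n
      · have hc : (Walk.cons hadj q).IsCycle :=
          (Walk.cons_isCycle_iff q hadj).mpr ⟨hqp, he⟩
        exact hodd v _ hc (hlen ▸ hodd_n)
    · obtain ⟨w, hw2⟩ : ∃ w, 2 ≤ q.support.count w := by
        by_contra hcon
        push_neg at hcon
        exact hnd (List.nodup_iff_count_le_one.mpr fun a => by have := hcon a; omega)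
      have hw : w ∈ (Walk.cons hadj q).support := by
        rw [Walk.support_cons]
        exact List.mem_cons_of_mem _ (List.count_pos_iff.mp (by omega))
      set p' : G.Walk w w := (Walk.cons hadj q).rotate w hw with hp'def
      have hperm : List.Perm p'.edges (Walk.cons hadj q).edges :=
        (Walk.rotate_edges _ w hw).perm
      have hlen' : p'.length = n := by
        have h2 := hperm.length_eq
        rw [Walk.length_edges, Walk.length_edges] at h2
        omega
      have hwt : walkWeight x p' = walkWeight x (Walk.cons hadj q) := by
        unfold walkWeight
        exact (hperm.map x).sum_eq
      have hcount : 2 ≤ p'.support.tail.count w := by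
        have hrot := Walk.support_rotate (Walk.cons hadj q) w hw
        rw [hrot.perm.count_eq]
        simpa [Walk.support_cons] using hw2
      have hnotnil : ¬ p'.Nil := by
        rw [Walk.not_nil_iff_lt_length, hlen']
        rcases hodd_n with ⟨k, hk⟩; omega
      obtain ⟨c, hadj2, r, hp'⟩ := Walk.not_nil_iff.mp hnotnil
      have hrsupp : p'.support.tail = r.support := by
        rw [hp', Walk.support_cons, List.tail_cons]
      have hwr : w ∈ r.support := by
        rw [← hrsupp]
        exact List.count_pos_iff.mp (by omega)
      have hr12 : (r.takeUntil w hwr).append (r.dropUntil w hwr) = r := r.take_spec hwr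
      set r1 := r.takeUntil w hwr with hr1def
      set r2 := r.dropUntil w hwr with hr2def
      have hr2pos : 0 < r2.length := by
        by_contra h0
        push_neg at h0
        have hnil : r2 = Walk.nil := by
          have : r2.Nil := Walk.nil_iff_length_eq.mpr (by omega)
          exact this.eq_nil
        have hr1r : r1 = r := by
          rw [← hr12, hnil, Walk.append_nil]
        have hone : r.support.count w = 1 := by
          rw [← hr1r]
          exact Walk.count_support_takeUntil_eq_one r hwr
        rw [← hrsupp] at hone
        omega
      have hlen'' : (1 + r1.length) + r2.length = n := by
        have h3 : r1.length + r2.length = r.length := by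
          have := congrArg Walk.length hr12
          rwa [Walk.length_append] at this
        have h4 : p'.length = r.length + 1 := by rw [hp', Walk.length_cons]
        omega
      have hedges : walkWeight x p' =
          walkWeight x (Walk.cons hadj2 r1) + walkWeight x r2 := by
        have : walkWeight x r = walkWeight x r1 + walkWeight x r2 := by
          rw [← hr12, walkWeight_append]
        rw [hp', walkWeight_cons, walkWeight_cons, this]
        ring
      have hA0 : 0 ≤ walkWeight x (Walk.cons hadj2 r1) := walkWeight_nonneg hx0 _
      have hB0 : 0 ≤ walkWeight x r2 := walkWeight_nonneg hx0 _
      have hkey : 1 ≤ walkWeight x p' := by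
        rcases Nat.even_or_odd (Walk.cons hadj2 r1).length with hA | hA
        · -- then r2 is odd
          have hBodd : Odd r2.length := by
            rw [Nat.even_iff] at hA
            rw [Nat.odd_iff] at hodd_n ⊢
            rw [Walk.length_cons] at hA
            omega
          have := ih r2.length (by omega) w r2 rfl hBodd
          rw [hedges]
          linarith
        · have := ih (Walk.cons hadj2 r1).length (by
            rw [Walk.length_cons]
            omega) w (Walk.cons hadj2 r1) rfl hA
          rw [hedges]
          linarith
      rw [← hwt]
      exact hkey

end Aux

/-- If every odd cycle has total weight at least 1, `x_e < 1/2` for every edge, and `S` is a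
set of vertices with pairwise distances at most `1/4`, then the induced subgraph `G[S]` is
bipartite. -/
theorem stmt10 {V : Type*} [Fintype V] (G : SimpleGraph V) (x : Sym2 V → ℝ)
    (hx : ∀ e ∈ G.edgeSet, 0 ≤ x e ∧ x e < 1 / 2)
    (hodd : ∀ (v : V) (C : G.Walk v v), C.IsCycle → Odd C.length → 1 ≤ walkWeight x C)
    (S : Set V) (hS : ∀ u ∈ S, ∀ v ∈ S, wdist G x u v ≤ 1 / 4) :
    (G.induce S).Colorable 2 := by
  classical
  have hx0 : ∀ e ∈ G.edgeSet, 0 ≤ x e := fun e he => (hx e he).1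
  have hone : ∀ (v : V) (p : G.Walk v v), Odd p.length → 1 ≤ walkWeight x p :=
    fun v p h => one_le_weight_of_odd_closed hx0 hodd p.length v p rfl h
  have heven : ∀ (v : V) (p : G.Walk v v), walkWeight x p < 1 → Even p.length := by
    intro v p hp
    rcases Nat.even_or_odd p.length with h | h
    · exact h
    · exact absurd hp (not_lt.mpr (hone v p h))
  -- existence of light walks
  have hex : ∀ u ∈ S, ∀ v ∈ S, ∀ η : ℝ, 0 < η → Nonempty (G.Walk u v) →
      ∃ p : G.Walk u v, walkWeight x p < 1/4 + η := by
    rintro u hu v hv η hη ⟨p0⟩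
    have hne : {r | ∃ p : G.Walk u v, walkWeight x p = r}.Nonempty := ⟨_, p0, rfl⟩
    have hlt : sInf {r | ∃ p : G.Walk u v, walkWeight x p = r} < 1/4 + η := by
      have := hS u hu v hv
      unfold wdist at this
      linarith
    obtain ⟨r, ⟨p, hp⟩, hr⟩ := exists_lt_of_csInf_lt hne hlt
    exact ⟨p, by rw [hp]; exact hr⟩
  -- parity uniqueness for light walks
  have huniq : ∀ (u v : V) (p q : G.Walk u v), walkWeight x p + walkWeight x q < 1 →
      (Odd p.length ↔ Odd q.length) := by
    intro u v p q h
    have hc := heven u (p.append q.reverse) (by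
      rw [walkWeight_append, walkWeight_reverse]; exact h)
    rw [Walk.length_append, Walk.length_reverse] at hc
    rw [Nat.even_iff] at hc
    rw [Nat.odd_iff, Nat.odd_iff]
    omega
  set par : V → V → Prop := fun a b => ∃ p : G.Walk a b, walkWeight x p < 1/4 + 1/100 ∧ Odd p.length
    with hpar_def
  have hpar : ∀ (a b : V) (p : G.Walk a b), walkWeight x p < 1/4 + 1/100 →
      (par a b ↔ Odd p.length) := by
    intro a b p hp
    constructor
    · rintro ⟨q, hq, hqodd⟩
      exact (huniq a b q p (by linarith)).mp hqodd
    · intro h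
      exact ⟨p, hp, h⟩
  -- base points
  let cmp : S → S := fun v => ((G.induce S).connectedComponentMk v).out
  have hcmp_reach : ∀ v : S, (G.induce S).Reachable (cmp v) v := by
    intro v
    have h1 : (G.induce S).connectedComponentMk ((G.induce S).connectedComponentMk v).out
        = (G.induce S).connectedComponentMk v := Quot.out_eq _
    exact ConnectedComponent.eq.mp h1
  have hreachG : ∀ v : S, Nonempty (G.Walk ((cmp v : S) : V) (v : V)) := by
    intro v
    exact (hcmp_reach v).map (Embedding.induce S).toHom
  -- the coloring validity
  have valid : ∀ {a b : S}, (G.induce S).Adj a b →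
      (fun v : S => decide (par ((cmp v : S) : V) (v : V))) a
      ≠ (fun v : S => decide (par ((cmp v : S) : V) (v : V))) b := by
    intro u v hadj
    have hadjG : G.Adj (u : V) (v : V) := hadj
    have hb : cmp u = cmp v := by
      have hcc : (G.induce S).connectedComponentMk u = (G.induce S).connectedComponentMk v :=
        ConnectedComponent.eq.mpr hadj.reachable
      simp only [cmp, hcc]
    have hxe := hx s((u : V), (v : V)) (G.mem_edgeSet.mpr hadjG)
    set η : ℝ := min ((1/2 - x s((u : V), (v : V)))/2) (1/100) with hη_def
    have hη : 0 < η := lt_min (by linarith [hxe.2]) (by norm_num)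
    have hη1 : η ≤ (1/2 - x s((u : V), (v : V)))/2 := min_le_left _ _
    have hη2 : η ≤ 1/100 := min_le_right _ _
    have hru : Nonempty (G.Walk ((cmp v : S) : V) (u : V)) := by
      rw [← hb]; exact hreachG u
    obtain ⟨pbu, hpbu⟩ := hex ((cmp v : S) : V) (cmp v).2 (u : V) u.2 η hη hru
    obtain ⟨pbv, hpbv⟩ := hex ((cmp v : S) : V) (cmp v).2 (v : V) v.2 η hη (hreachG v)
    -- closed walk: base → u → v → base
    have hK : walkWeight x (pbu.append ((Walk.cons hadjG Walk.nil).append pbv.reverse)) < 1 := by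
      rw [walkWeight_append, walkWeight_append, walkWeight_reverse, walkWeight_cons,
        walkWeight_nil]
      linarith
    have hEv := heven _ _ hK
    rw [Walk.length_append, Walk.length_append, Walk.length_reverse, Walk.length_cons,
      Walk.length_nil] at hEv
    have hPu : par ((cmp u : S) : V) (u : V) ↔ Odd pbu.length := by
      rw [show ((cmp u : S) : V) = ((cmp v : S) : V) by rw [hb]]
      exact hpar _ _ pbu (by linarith)
    have hPv : par ((cmp v : S) : V) (v : V) ↔ Odd pbv.length :=
      hpar _ _ pbv (by linarith)
    simp only [ne_eq, decide_eq_decide]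
    intro hcontra
    have h1 : Odd pbu.length ↔ Odd pbv.length := by
      rw [← hPu, ← hPv]; exact hcontra
    rw [Nat.even_iff] at hEv
    rw [Nat.odd_iff, Nat.odd_iff] at h1
    omega
  have C : (G.induce S).Coloring Bool := Coloring.mk _ valid
  simpa using C.colorable
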